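/- Let M be the parallel connection of loopless matroids M1 and M2 at basepoints p1 ∈ E1 and p2 ∈ E2. Define the linear map φ from R^E/R·1_E to (R^{E1}/R·1_{E1}) ⊕ (R^{E2}/R·1_{E2}) by φ(ē_x) = ē_x for x ≠ p and φ(ē_p) = ē_{p1} + ē_{p2}. Then φ is a vector space isomorphism, and a point x lies in the support of the Bergman fan of M if and only if φ(x) lies in the support of the product of the Bergman fans of M1 and M2. -/

import Mathlib

/-- A circuit of a matroid: a minimal dependent subset of the ground set. -/
def IsCircuit {α : Type*} (M : Matroid α) (C : Set α) : Prop :=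
  C ⊆ M.E ∧ ¬ M.Indep C ∧ ∀ x ∈ C, M.Indep (C \ {x})

/-- A matroid is loopless if every singleton of the ground set is independent. -/
def MLoopless {α : Type*} (M : Matroid α) : Prop := ∀ a ∈ M.E, M.Indep {a}

/-- The circuits of the parallel connection of `M₁` and `M₂` at the (identified) basepoint
`p`: circuits of `M₁`, circuits of `M₂`, and sets `I₁ ⊔ I₂` with `I_i ∪ {p}` a circuit
of `M_i`. -/
def ParallelCircuit {α : Type*} (M₁ M₂ : Matroid α) (p : α) (C : Set α) : Prop :=
  IsCircuit M₁ C ∨ IsCircuit M₂ C ∨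
    ∃ I₁ I₂ : Set α, p ∉ I₁ ∧ p ∉ I₂ ∧ IsCircuit M₁ (insert p I₁) ∧
      IsCircuit M₂ (insert p I₂) ∧ C = I₁ ∪ I₂

/-- The line `ℝ·1` of constant functions inside `S → ℝ`. -/
def constOneSpan {α : Type*} (S : Set α) : Submodule ℝ (↥S → ℝ) :=
  Submodule.span ℝ {fun _ => (1 : ℝ)}

/-- `ℝ^S / ℝ·1`. -/
abbrev QuotByOne {α : Type*} (S : Set α) := (↥S → ℝ) ⧸ constOneSpan S

/-- The minimum of `x` over `C` is achieved at least twice. -/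
def MinAchievedTwice {α : Type*} (C : Set α) (x : α → ℝ) : Prop :=
  ∃ i ∈ C, ∃ j ∈ C, i ≠ j ∧ x i = x j ∧ ∀ k ∈ C, x i ≤ x k

/-- A point (given by a representative `x : α → ℝ`) lies in the support of the Bergman
fan of `M` iff for every circuit `C` of `M` the minimum `min{x i : i ∈ C}` is achieved
at least twice. -/
def InBergmanSupport {α : Type*} (M : Matroid α) (x : α → ℝ) : Prop :=
  ∀ C, IsCircuit M C → MinAchievedTwice C x

/-- let `M` be the parallel connection of loopless matroids `M₁`, `M₂` at
the identified basepoint `p`.  Then the linear map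
`φ : ℝ^E/ℝ·1 → (ℝ^{E₁}/ℝ·1) ⊕ (ℝ^{E₂}/ℝ·1)` induced by restriction of functions (which
sends `ē_x ↦ ē_x` for `x ≠ p` and `ē_p ↦ ē_{p₁} + ē_{p₂}`) is a vector space isomorphism,
and a point lies in the support of the Bergman fan of `M` iff its image under `φ` lies in
the support of the product of the Bergman fans of `M₁` and `M₂`. -/

private lemma aux_asym {α : Type*} {I₁ I₂ : Set α} {p : α} {x : α → ℝ}
    (hd : ∀ a ∈ I₁, a ∉ I₂) {i₁ j₁ i₂ j₂ : α}
    (hi₁ : i₁ ∈ insert p I₁) (hj₁ : j₁ ∈ insert p I₁) (hne₁ : i₁ ≠ j₁)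
    (heq₁ : x i₁ = x j₁) (hmin₁ : ∀ k ∈ insert p I₁, x i₁ ≤ x k)
    (hi₂ : i₂ ∈ insert p I₂) (hj₂ : j₂ ∈ insert p I₂) (hne₂ : i₂ ≠ j₂)
    (heq₂ : x i₂ = x j₂) (hmin₂ : ∀ k ∈ insert p I₂, x i₂ ≤ x k)
    (hle : x i₁ ≤ x i₂) : MinAchievedTwice (I₁ ∪ I₂) x := by
  have hp2 : x i₂ ≤ x p := hmin₂ p (Set.mem_insert _ _)
  rcases lt_or_eq_of_le hle with hlt | heq
  · -- strict case: both i₁, j₁ lie in I₁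
    have hi₁' : i₁ ∈ I₁ := by
      rcases hi₁ with h | h
      · exact absurd (h ▸ (lt_of_lt_of_le hlt hp2)) (lt_irrefl _)
      · exact h
    have hj₁' : j₁ ∈ I₁ := by
      rcases hj₁ with h | h
      · exact absurd (heq₁ ▸ h ▸ (lt_of_lt_of_le hlt hp2)) (lt_irrefl _)
      · exact h
    refine ⟨i₁, Or.inl hi₁', j₁, Or.inl hj₁', hne₁, heq₁, ?_⟩
    rintro k (hk | hk)
    · exact hmin₁ k (Set.mem_insert_of_mem _ hk)
    · exact le_trans (le_of_lt hlt) (hmin₂ k (Set.mem_insert_of_mem _ hk))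
  · -- equal minima: pick one representative in each part
    obtain ⟨a₁, ha₁, hxa₁⟩ : ∃ a ∈ I₁, x a = x i₁ := by
      rcases hi₁ with h | h
      · rcases hj₁ with h' | h'
        · exact absurd (h.trans h'.symm) hne₁
        · exact ⟨j₁, h', heq₁.symm⟩
      · exact ⟨i₁, h, rfl⟩
    obtain ⟨a₂, ha₂, hxa₂⟩ : ∃ a ∈ I₂, x a = x i₂ := by
      rcases hi₂ with h | h
      · rcases hj₂ with h' | h'
        · exact absurd (h.trans h'.symm) hne₂
        · exact ⟨j₂, h', heq₂.symm⟩
      · exact ⟨i₂, h, rfl⟩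
    refine ⟨a₁, Or.inl ha₁, a₂, Or.inr ha₂, fun he => hd a₁ ha₁ (he ▸ ha₂), by
      rw [hxa₁, hxa₂, heq], ?_⟩
    rintro k (hk | hk)
    · rw [hxa₁]; exact hmin₁ k (Set.mem_insert_of_mem _ hk)
    · rw [hxa₁, heq]; exact hmin₂ k (Set.mem_insert_of_mem _ hk)

private lemma aux_union {α : Type*} {I₁ I₂ : Set α} {p : α} {x : α → ℝ}
    (hd : ∀ a ∈ I₁, a ∉ I₂)
    (h1 : MinAchievedTwice (insert p I₁) x)
    (h2 : MinAchievedTwice (insert p I₂) x) : MinAchievedTwice (I₁ ∪ I₂) x := by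
  obtain ⟨i₁, hi₁, j₁, hj₁, hne₁, heq₁, hmin₁⟩ := h1
  obtain ⟨i₂, hi₂, j₂, hj₂, hne₂, heq₂, hmin₂⟩ := h2
  rcases le_total (x i₁) (x i₂) with h | h
  · exact aux_asym hd hi₁ hj₁ hne₁ heq₁ hmin₁ hi₂ hj₂ hne₂ heq₂ hmin₂ h
  · have := aux_asym (fun a ha ha' => hd a ha' ha)
      hi₂ hj₂ hne₂ heq₂ hmin₂ hi₁ hj₁ hne₁ heq₁ hmin₁ h
    rwa [Set.union_comm] at this

theorem parallelConnection_bergman_iso {α : Type*} (M₁ M₂ M : Matroid α) (p : α)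
    (hl₁ : MLoopless M₁) (hl₂ : MLoopless M₂)
    (hmeet : M₁.E ∩ M₂.E = {p})
    (hE : M.E = M₁.E ∪ M₂.E)
    (hC : ∀ C, IsCircuit M C ↔ ParallelCircuit M₁ M₂ p C) :
    (∃ Φ : QuotByOne (M₁.E ∪ M₂.E) ≃ₗ[ℝ] QuotByOne M₁.E × QuotByOne M₂.E,
      ∀ x : ↥(M₁.E ∪ M₂.E) → ℝ,
        Φ (Submodule.Quotient.mk x) =
          (Submodule.Quotient.mk (x ∘ Set.inclusion Set.subset_union_left),
           Submodule.Quotient.mk (x ∘ Set.inclusion Set.subset_union_right))) ∧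
    (∀ x : α → ℝ, InBergmanSupport M x ↔ InBergmanSupport M₁ x ∧ InBergmanSupport M₂ x) := by
  classical
  have hp : p ∈ M₁.E ∩ M₂.E := by rw [hmeet]; exact Set.mem_singleton p
  have hp1 : p ∈ M₁.E := hp.1
  have hp2 : p ∈ M₂.E := hp.2
  constructor
  · -- the linear isomorphism
    set L : (↥(M₁.E ∪ M₂.E) → ℝ) →ₗ[ℝ] QuotByOne M₁.E × QuotByOne M₂.E :=
      LinearMap.prod
        ((constOneSpan M₁.E).mkQ.comp
          (LinearMap.funLeft ℝ ℝ (Set.inclusion Set.subset_union_left)))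
        ((constOneSpan M₂.E).mkQ.comp
          (LinearMap.funLeft ℝ ℝ (Set.inclusion Set.subset_union_right))) with hL
    have hle : constOneSpan (M₁.E ∪ M₂.E) ≤ LinearMap.ker L := by
      rw [constOneSpan, Submodule.span_le, Set.singleton_subset_iff]
      have h1 : ((fun _ => (1:ℝ)) : ↥M₁.E → ℝ) ∈ constOneSpan M₁.E :=
        Submodule.subset_span rfl
      have h2 : ((fun _ => (1:ℝ)) : ↥M₂.E → ℝ) ∈ constOneSpan M₂.E :=
        Submodule.subset_span rfl
      simp only [SetLike.mem_coe, LinearMap.mem_ker, hL, LinearMap.prod_apply,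
        LinearMap.comp_apply, Function.prod, Prod.mk_eq_zero, Submodule.mkQ_apply,
        Submodule.Quotient.mk_eq_zero]
      exact ⟨h1, h2⟩
    set Φ₀ : QuotByOne (M₁.E ∪ M₂.E) →ₗ[ℝ] QuotByOne M₁.E × QuotByOne M₂.E :=
      Submodule.liftQ _ L hle with hΦ₀
    have hker : LinearMap.ker L ≤ constOneSpan (M₁.E ∪ M₂.E) := by
      intro x hx
      rw [LinearMap.mem_ker] at hx
      have hx1 : Submodule.Quotient.mk
          (x ∘ Set.inclusion (Set.subset_union_left : M₁.E ⊆ M₁.E ∪ M₂.E))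
          = (0 : QuotByOne M₁.E) := congrArg Prod.fst hx
      have hx2 : Submodule.Quotient.mk
          (x ∘ Set.inclusion (Set.subset_union_right : M₂.E ⊆ M₁.E ∪ M₂.E))
          = (0 : QuotByOne M₂.E) := congrArg Prod.snd hx
      rw [Submodule.Quotient.mk_eq_zero, constOneSpan,
        Submodule.mem_span_singleton] at hx1 hx2
      obtain ⟨c₁, hc₁⟩ := hx1
      obtain ⟨c₂, hc₂⟩ := hx2
      have hcp : c₁ = c₂ := by
        have e1 := congrFun hc₁ ⟨p, hp1⟩
        have e2 := congrFun hc₂ ⟨p, hp2⟩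
        simp only [Pi.smul_apply, smul_eq_mul, mul_one, Function.comp_apply] at e1 e2
        rw [e1, e2]
      rw [constOneSpan, Submodule.mem_span_singleton]
      refine ⟨c₁, funext fun a => ?_⟩
      rcases a.2 with ha | ha
      · have h := congrFun hc₁ ⟨a.1, ha⟩
        simp only [Pi.smul_apply, smul_eq_mul, mul_one, Function.comp_apply] at h ⊢
        exact h
      · have h := congrFun hc₂ ⟨a.1, ha⟩
        simp only [Pi.smul_apply, smul_eq_mul, mul_one, Function.comp_apply] at h ⊢
        rw [hcp]
        exact h
    have hinj : Function.Injective Φ₀ := by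
      rw [← LinearMap.ker_eq_bot, hΦ₀, Submodule.ker_liftQ_eq_bot _ _ _ hker]
    have hsurj : Function.Surjective Φ₀ := by
      rintro ⟨q₁, q₂⟩
      obtain ⟨y₁, rfl⟩ := Submodule.Quotient.mk_surjective _ q₁
      obtain ⟨y₂, rfl⟩ := Submodule.Quotient.mk_surjective _ q₂
      set c : ℝ := y₂ ⟨p, hp2⟩ - y₁ ⟨p, hp1⟩ with hc
      set x : ↥(M₁.E ∪ M₂.E) → ℝ := fun a =>
        if h : (a : α) ∈ M₁.E then y₁ ⟨a, h⟩ else y₂ ⟨a, a.2.resolve_left h⟩ - c with hxdef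
      refine ⟨Submodule.Quotient.mk x, ?_⟩
      have hfst : (x ∘ Set.inclusion (Set.subset_union_left : M₁.E ⊆ M₁.E ∪ M₂.E)) = y₁ := by
        funext s
        simp only [Function.comp_apply, Set.inclusion, hxdef]
        rw [dif_pos s.2]
      have hsnd : (x ∘ Set.inclusion (Set.subset_union_right : M₂.E ⊆ M₁.E ∪ M₂.E)) - y₂
          = (-c) • (fun _ => (1:ℝ)) := by
        funext s
        simp only [Pi.sub_apply, Pi.smul_apply, smul_eq_mul, mul_one,
          Function.comp_apply, Set.inclusion, hxdef]
        by_cases h : (s : α) ∈ M₁.E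
        · rw [dif_pos h]
          have hsp : (s : α) = p := by
            have : (s : α) ∈ M₁.E ∩ M₂.E := ⟨h, s.2⟩
            rwa [hmeet] at this
          have h1 : y₁ ⟨(s : α), h⟩ = y₁ ⟨p, hp1⟩ := by congr 1; exact Subtype.ext hsp
          have h2 : y₂ s = y₂ ⟨p, hp2⟩ := by congr 1; exact Subtype.ext hsp
          rw [h1, h2, hc]; ring
        · rw [dif_neg h]
          show y₂ s - c - y₂ s = -c
          ring
      have hLx : Φ₀ (Submodule.Quotient.mk x) = L x := Submodule.liftQ_apply _ L _
      rw [hLx]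
      have heq1 : (Submodule.Quotient.mk
          (x ∘ Set.inclusion (Set.subset_union_left : M₁.E ⊆ M₁.E ∪ M₂.E)) :
          QuotByOne M₁.E) = Submodule.Quotient.mk y₁ :=
        congrArg Submodule.Quotient.mk hfst
      have heq2 : (Submodule.Quotient.mk
          (x ∘ Set.inclusion (Set.subset_union_right : M₂.E ⊆ M₁.E ∪ M₂.E)) :
          QuotByOne M₂.E) = Submodule.Quotient.mk y₂ := by
        rw [Submodule.Quotient.eq, hsnd]
        exact Submodule.smul_mem _ _ (Submodule.subset_span rfl)
      exact Prod.ext heq1 heq2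
    refine ⟨LinearEquiv.ofBijective Φ₀ ⟨hinj, hsurj⟩, fun x => ?_⟩
    rfl
  · -- the Bergman support statement
    intro x
    constructor
    · intro h
      exact ⟨fun C hCc => h C ((hC C).mpr (Or.inl hCc)),
             fun C hCc => h C ((hC C).mpr (Or.inr (Or.inl hCc)))⟩
    · rintro ⟨h1, h2⟩ C hCc
      rw [hC] at hCc
      rcases hCc with hc | hc | ⟨I₁, I₂, hpI₁, hpI₂, hc1, hc2, rfl⟩
      · exact h1 C hc
      · exact h2 C hc
      · have hd : ∀ a ∈ I₁, a ∉ I₂ := by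
          intro a ha ha'
          have hmem : a ∈ M₁.E ∩ M₂.E :=
            ⟨hc1.1 (Set.mem_insert_of_mem _ ha), hc2.1 (Set.mem_insert_of_mem _ ha')⟩
          rw [hmeet] at hmem
          exact hpI₁ (hmem ▸ ha)
        exact aux_union hd (h1 _ hc1) (h2 _ hc2)
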